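/- Let G be a finite directed graph with node set V and arc set A ⊆ V × V, arc resistances β : A → ℝ with β_a > 0, distinct nodes s, t ∈ V, and potential interval [π_min, π_max]. The supremum of the values of feasible 2-stage gas s-t-flows equals twice the supremum of the values of feasible stationary gas s-t-flows. Equivalently, taking two copies of a maximum feasible stationary gas s-t-flow yields an optimal solution to the maximum 2-stage gas s-t-flow problem. -/

import Mathlib

set_option linter.unusedSectionVars false
set_option linter.unusedVariables false
set_option maxHeartbeats 1000000

open Finset

/-- The stationary gas flow induced by node potentials `π` and resistances `β`
(Weymouth's equation). -/
noncomputable def inducedFlow {V : Type*} (β : V × V → ℝ) (π : V → ℝ) (a : V × V) : ℝ :=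
  Real.sign (π a.1 - π a.2) * Real.sqrt (|π a.1 - π a.2| / β a)

/-- The node balance (outflow minus inflow) at node `v` of the stationary gas flow
induced by `π`. -/
noncomputable def balance {V : Type*} [DecidableEq V] (A : Finset (V × V))
    (β : V × V → ℝ) (π : V → ℝ) (v : V) : ℝ :=
  (∑ a ∈ A.filter (fun a => a.1 = v), inducedFlow β π a) -
    (∑ a ∈ A.filter (fun a => a.2 = v), inducedFlow β π a)

/-- The set of values of feasible stationary gas s-t-flows. -/
def statValues {V : Type*} [Fintype V] [DecidableEq V] (A : Finset (V × V))
    (β : V × V → ℝ) (s t : V) (πmin πmax : ℝ) : Set ℝ :=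
  {q : ℝ | ∃ π : V → ℝ, (∀ v : V, πmin ≤ π v ∧ π v ≤ πmax) ∧
    ∀ v : V, balance A β π v = if v = s then q else if v = t then -q else 0}

/-- The set of values of feasible 2-stage gas s-t-flows. -/
def twoStageValues {V : Type*} [Fintype V] [DecidableEq V] (A : Finset (V × V))
    (β : V × V → ℝ) (s t : V) (πmin πmax : ℝ) : Set ℝ :=
  {q : ℝ | ∃ π₁ π₂ : V → ℝ, (∀ v : V, πmin ≤ π₁ v ∧ π₁ v ≤ πmax) ∧
    (∀ v : V, πmin ≤ π₂ v ∧ π₂ v ≤ πmax) ∧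
    ∀ v : V, balance A β π₁ v + balance A β π₂ v =
      if v = s then q else if v = t then -q else 0}

namespace GasAux


noncomputable def ff (b d : ℝ) : ℝ := Real.sign d * Real.sqrt (|d| / b)

noncomputable def gg (b x : ℝ) : ℝ := b * (x * |x|)

lemma ff_zero (b : ℝ) : ff b 0 = 0 := by simp [ff]

lemma ff_pos {b : ℝ} (hb : 0 < b) {d : ℝ} (hd : 0 < d) : 0 < ff b d := by
  have h1 : Real.sign d = 1 := Real.sign_of_pos hd
  have h2 : 0 < |d| / b := div_pos (abs_pos.mpr hd.ne') hb
  simpa [ff, h1] using Real.sqrt_pos.mpr h2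

lemma ff_neg {b : ℝ} (hb : 0 < b) {d : ℝ} (hd : d < 0) : ff b d < 0 := by
  have h1 : Real.sign d = -1 := Real.sign_of_neg hd
  have h2 : 0 < |d| / b := div_pos (abs_pos.mpr hd.ne) hb
  have := Real.sqrt_pos.mpr h2
  simp only [ff, h1]
  nlinarith

lemma gg_ff {b : ℝ} (hb : 0 < b) (d : ℝ) : gg b (ff b d) = d := by
  rcases lt_trichotomy d 0 with hd | hd | hd
  · have h1 : Real.sign d = -1 := Real.sign_of_neg hd
    have hnn : 0 ≤ |d| / b := div_nonneg (abs_nonneg d) hb.le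
    have hs : 0 ≤ Real.sqrt (|d| / b) := Real.sqrt_nonneg _
    have hms : Real.sqrt (|d| / b) * Real.sqrt (|d| / b) = |d| / b := Real.mul_self_sqrt hnn
    have habs : |(-1 : ℝ) * Real.sqrt (|d| / b)| = Real.sqrt (|d| / b) := by
      rw [neg_one_mul, abs_neg, abs_of_nonneg hs]
    simp only [gg, ff, h1, habs]
    have : -1 * Real.sqrt (|d| / b) * Real.sqrt (|d| / b) = -(|d| / b) := by
      rw [neg_one_mul, neg_mul, hms]
    rw [this]
    rw [abs_of_neg hd]
    field_simp
  · simp [hd, ff_zero, gg]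
  · have h1 : Real.sign d = 1 := Real.sign_of_pos hd
    have hnn : 0 ≤ |d| / b := div_nonneg (abs_nonneg d) hb.le
    have hs : 0 ≤ Real.sqrt (|d| / b) := Real.sqrt_nonneg _
    have hms : Real.sqrt (|d| / b) * Real.sqrt (|d| / b) = |d| / b := Real.mul_self_sqrt hnn
    have habs : |d| = d := abs_of_pos hd
    simp only [gg, ff, h1, one_mul, abs_of_nonneg hs]
    rw [hms, habs]
    field_simp

lemma ff_gg {b : ℝ} (hb : 0 < b) (x : ℝ) : ff b (gg b x) = x := by
  rcases lt_trichotomy x 0 with hx | hx | hx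
  · have hgg : gg b x < 0 := by
      have : x * |x| < 0 := by
        have := abs_pos.mpr hx.ne; nlinarith [abs_nonneg x]
      exact mul_neg_of_pos_of_neg hb this
    have h1 : Real.sign (gg b x) = -1 := Real.sign_of_neg hgg
    have habs : |gg b x| = b * (x * x) := by
      rw [abs_of_neg hgg, gg, abs_of_neg hx]; ring
    simp only [ff, h1, habs]
    have h2 : b * (x * x) / b = x * x := by field_simp
    rw [h2]
    have h3 : Real.sqrt (x * x) = -x := by
      rw [show x * x = (-x) * (-x) by ring]; exact Real.sqrt_mul_self (by linarith)
    rw [h3]; ring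
  · simp [hx, gg, ff_zero]
  · have hgg : 0 < gg b x := by
      have : 0 < x * |x| := by have := abs_of_pos hx; nlinarith
      exact mul_pos hb this
    have h1 : Real.sign (gg b x) = 1 := Real.sign_of_pos hgg
    have habs : |gg b x| = b * (x * x) := by
      rw [abs_of_pos hgg, gg, abs_of_pos hx]
    simp only [ff, h1, habs, one_mul]
    have h2 : b * (x * x) / b = x * x := by field_simp
    rw [h2, Real.sqrt_mul_self hx.le]

lemma x_mul_gg (b x : ℝ) : x * gg b x = b * |x| ^ 3 := by
  have h : |x| * |x| = x * x := abs_mul_abs_self x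
  have h3 : |x| ^ 3 = |x| * |x| * |x| := by ring
  rw [gg, h3, h]
  ring

lemma ff_abs_le {b : ℝ} (hb : 0 < b) {d D : ℝ} (hd : |d| ≤ D) :
    |ff b d| ≤ Real.sqrt (D / b) := by
  have h1 : |ff b d| ≤ Real.sqrt (|d| / b) := by
    rw [ff, abs_mul]
    have hsg : |Real.sign d| ≤ 1 := by
      rcases lt_trichotomy d 0 with h | h | h <;>
        simp [Real.sign_of_neg, Real.sign_of_pos, h]
    have hs : 0 ≤ Real.sqrt (|d| / b) := Real.sqrt_nonneg _
    calc |Real.sign d| * |Real.sqrt (|d| / b)| ≤ 1 * |Real.sqrt (|d| / b)| :=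
          mul_le_mul_of_nonneg_right hsg (abs_nonneg _)
      _ = Real.sqrt (|d| / b) := by rw [one_mul, abs_of_nonneg hs]
  refine h1.trans (Real.sqrt_le_sqrt ?_)
  gcongr

/-- core convexity inequality, nonneg-sum case -/
lemma core_aux {u v : ℝ} (h : 0 ≤ u + v) :
    (u + v) * ((u + v) * |u + v|) / 2 ≤ (u + v) * (u * |u| + v * |v|) := by
  rcases le_total 0 u with hu | hu <;> rcases le_total 0 v with hv | hv
  · rw [abs_of_nonneg hu, abs_of_nonneg hv, abs_of_nonneg h]
    nlinarith [mul_nonneg h (sq_nonneg (u - v))]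
  · rw [abs_of_nonneg hu, abs_of_nonpos hv, abs_of_nonneg h]
    nlinarith [mul_nonneg (mul_nonneg h h) (by linarith : (0:ℝ) ≤ u - 3 * v)]
  · rw [abs_of_nonpos hu, abs_of_nonneg hv, abs_of_nonneg h]
    nlinarith [mul_nonneg (mul_nonneg h h) (by linarith : (0:ℝ) ≤ v - 3 * u)]
  · have h0 : u + v = 0 := le_antisymm (by linarith) h
    rw [h0]; simp

lemma core_ineq (u v : ℝ) :
    (u + v) * ((u + v) * |u + v|) / 2 ≤ (u + v) * (u * |u| + v * |v|) := by
  rcases le_total 0 (u + v) with h | h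
  · exact core_aux h
  · have := core_aux (u := -u) (v := -v) (by linarith)
    have e1 : |(-u) + -v| = |u + v| := by rw [show (-u) + -v = -(u+v) by ring, abs_neg]
    have e2 : |(-u)| = |u| := abs_neg u
    have e3 : |(-v)| = |v| := abs_neg v
    rw [e1, e2, e3] at this
    nlinarith [this]

/-- derivative of |x|^3 -/
lemma hasDerivAt_abs_cube (y : ℝ) : HasDerivAt (fun x : ℝ => |x| ^ 3) (3 * (y * |y|)) y := by
  rcases lt_trichotomy y 0 with hy | hy | hy
  · have h : HasDerivAt (fun x : ℝ => -(x ^ 3)) (3 * (y * |y|)) y := by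
      have := (hasDerivAt_pow 3 y).neg
      exact this.congr_deriv (by rw [abs_of_neg hy]; push_cast; ring)
    apply h.congr_of_eventuallyEq
    filter_upwards [eventually_lt_nhds hy] with x hx
    rw [abs_of_neg hx]; ring
  · subst hy
    have : HasDerivAt (fun x : ℝ => |x| ^ 3) 0 0 := by
      rw [hasDerivAt_iff_isLittleO]
      simp only [abs_zero, zero_pow, sub_zero, smul_zero, ne_eq, OfNat.ofNat_ne_zero,
        not_false_eq_true]
      rw [Asymptotics.isLittleO_iff]
      intro c hc
      filter_upwards [Metric.ball_mem_nhds 0 (show (0:ℝ) < min c 1 by positivity)] with x hx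
      simp only [Metric.mem_ball, Real.dist_eq, sub_zero] at hx
      have hx1 : |x| < 1 := lt_of_lt_of_le hx (min_le_right _ _)
      have hxc : |x| < c := lt_of_lt_of_le hx (min_le_left _ _)
      simp only [norm_norm, Real.norm_eq_abs, sub_zero]
      have : |(|x| ^ 3)| = |x| ^ 3 := abs_of_nonneg (by positivity)
      rw [this]
      have h9 : |x| * |x| ≤ c * 1 := mul_le_mul hxc.le hx1.le (abs_nonneg x) hc.le
      have : |x| ^ 3 ≤ c * |x| := by
        have h8 : |x| ^ 3 = |x| * |x| * |x| := by ring
        rw [h8]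
        calc |x| * |x| * |x| ≤ c * 1 * |x| :=
              mul_le_mul_of_nonneg_right h9 (abs_nonneg x)
          _ = c * |x| := by ring
      simpa using this
    simpa using this
  · have h : HasDerivAt (fun x : ℝ => x ^ 3) (3 * (y * |y|)) y := by
      have := hasDerivAt_pow 3 y
      exact this.congr_deriv (by rw [abs_of_pos hy]; push_cast; ring)
    apply h.congr_of_eventuallyEq
    filter_upwards [eventually_gt_nhds hy] with x hx
    rw [abs_of_pos hx]



variable {V : Type*} [Fintype V] [DecidableEq V]

noncomputable def bal (A : Finset (V × V)) (x : ↥A → ℝ) (v : V) : ℝ :=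
  (∑ a : ↥A, if (a : V × V).1 = v then x a else 0) -
  (∑ a : ↥A, if (a : V × V).2 = v then x a else 0)

lemma balance_eq_bal (A : Finset (V × V)) (β : V × V → ℝ) (π : V → ℝ) (v : V) :
    balance A β π v = bal A (fun a => inducedFlow β π ↑a) v := by
  unfold balance bal
  congr 1
  · rw [Finset.sum_filter, ← Finset.sum_coe_sort A (fun a => if a.1 = v then inducedFlow β π a else 0)]
  · rw [Finset.sum_filter, ← Finset.sum_coe_sort A (fun a => if a.2 = v then inducedFlow β π a else 0)]

lemma bal_linear (A : Finset (V × V)) (x z : ↥A → ℝ) (ε : ℝ) (v : V) :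
    bal A (fun a => x a + ε * z a) v = bal A x v + ε * bal A z v := by
  unfold bal
  rw [mul_sub]
  have h1 : ∀ (p : ↥A → Prop) (_ : DecidablePred p),
      (∑ a : ↥A, if p a then x a + ε * z a else 0) =
      (∑ a : ↥A, if p a then x a else 0) + ε * ∑ a : ↥A, if p a then z a else 0 := by
    intro p hp
    rw [Finset.mul_sum, ← Finset.sum_add_distrib]
    apply Finset.sum_congr rfl
    intro a _
    split_ifs <;> ring
  rw [h1 (fun a => (a : V × V).1 = v) _, h1 (fun a => (a : V × V).2 = v) _]
  ring

/-- summation by parts -/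
lemma parts (A : Finset (V × V)) (x : ↥A → ℝ) (ψ : V → ℝ) :
    ∑ a : ↥A, x a * (ψ (a : V × V).1 - ψ (a : V × V).2) = ∑ v : V, bal A x v * ψ v := by
  unfold bal
  have h1 : ∀ (q : ↥A → V),
      ∑ v : V, (∑ a : ↥A, if q a = v then x a else 0) * ψ v = ∑ a : ↥A, x a * ψ (q a) := by
    intro q
    have : ∀ v : V, (∑ a : ↥A, if q a = v then x a else 0) * ψ v
        = ∑ a : ↥A, if q a = v then x a * ψ v else 0 := by
      intro v
      rw [Finset.sum_mul]
      apply Finset.sum_congr rfl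
      intro a _
      split_ifs <;> ring
    rw [Finset.sum_congr rfl (fun v _ => this v), Finset.sum_comm]
    apply Finset.sum_congr rfl
    intro a _
    have : ∀ v ∈ Finset.univ, (if q a = v then x a * ψ v else 0) =
        if q a = v then x a * ψ (q a) else 0 := by
      intro v _
      split_ifs with h
      · rw [h]
      · rfl
    rw [Finset.sum_congr rfl this, Finset.sum_ite_eq Finset.univ (q a) (fun _ => x a * ψ (q a))]
    simp
  have e1 := h1 (fun a => (a : V × V).1)
  have e2 := h1 (fun a => (a : V × V).2)
  calc ∑ a : ↥A, x a * (ψ (a : V × V).1 - ψ (a : V × V).2)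
      = (∑ a : ↥A, x a * ψ (a : V × V).1) - ∑ a : ↥A, x a * ψ (a : V × V).2 := by
        rw [← Finset.sum_sub_distrib]; apply Finset.sum_congr rfl; intro a _; ring
    _ = ∑ v : V, ((∑ a : ↥A, if (a : V × V).1 = v then x a else 0) * ψ v)
        - ∑ v : V, ((∑ a : ↥A, if (a : V × V).2 = v then x a else 0) * ψ v) := by rw [e1, e2]
    _ = ∑ v : V, ((∑ a : ↥A, if (a : V × V).1 = v then x a else 0) -
          (∑ a : ↥A, if (a : V × V).2 = v then x a else 0)) * ψ v := by
        rw [← Finset.sum_sub_distrib]; apply Finset.sum_congr rfl; intro v _; ring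

/-- cut sums -/
lemma cut (A : Finset (V × V)) (x : ↥A → ℝ) (S : Finset V) :
    ∑ v ∈ S, bal A x v =
      ∑ a : ↥A, x a * ((if (a : V × V).1 ∈ S then 1 else 0) -
        (if (a : V × V).2 ∈ S then 1 else 0)) := by
  unfold bal
  have h1 : ∀ (q : ↥A → V),
      ∑ v ∈ S, (∑ a : ↥A, if q a = v then x a else 0) =
        ∑ a : ↥A, if q a ∈ S then x a else 0 := by
    intro q
    rw [Finset.sum_comm]
    apply Finset.sum_congr rfl
    intro a _
    rw [Finset.sum_ite_eq S (q a) (fun _ => x a)]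
  rw [Finset.sum_sub_distrib, h1 (fun a => (a : V × V).1), h1 (fun a => (a : V × V).2),
    ← Finset.sum_sub_distrib]
  apply Finset.sum_congr rfl
  intro a _
  split_ifs <;> ring

/-- existence of potentials from orthogonality to circulations -/
lemma exists_potential (A : Finset (V × V)) (d : EuclideanSpace ℝ ↥A)
    (h : ∀ z : ↥A → ℝ, (∀ v : V, bal A z v = 0) → ∑ a : ↥A, d a * z a = 0) :
    ∃ σ : V → ℝ, ∀ a : ↥A, d a = σ (a : V × V).1 - σ (a : V × V).2 := by
  classical
  let Dmap : (V → ℝ) →ₗ[ℝ] EuclideanSpace ℝ ↥A :=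
    { toFun := fun σ => WithLp.toLp 2 (fun a => σ (a : V × V).1 - σ (a : V × V).2 : ↥A → ℝ)
      map_add' := by
        intro σ τ; ext a
        show (σ + τ) (a : V × V).1 - (σ + τ) (a : V × V).2
          = (σ (a : V × V).1 - σ (a : V × V).2) + (τ (a : V × V).1 - τ (a : V × V).2)
        simp [Pi.add_apply]; ring
      map_smul' := by
        intro c σ; ext a
        show (c • σ) (a : V × V).1 - (c • σ) (a : V × V).2
          = c * (σ (a : V × V).1 - σ (a : V × V).2)
        simp [Pi.smul_apply, smul_eq_mul]; ring }
  let U : Submodule ℝ (EuclideanSpace ℝ ↥A) := LinearMap.range Dmap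
  have hmem : d ∈ U ⊔ Uᗮ := by
    rw [Submodule.sup_orthogonal_of_hasOrthogonalProjection]
    trivial
  obtain ⟨u, hu, z, hz, hdz⟩ := Submodule.mem_sup.mp hmem
  have hinner : ∀ (x y : EuclideanSpace ℝ ↥A), (inner ℝ x y : ℝ) = ∑ a : ↥A, x a * y a := by
    intro x y
    rw [PiLp.inner_apply]
    simp [RCLike.inner_apply, conj_trivial]
    exact Finset.sum_congr rfl (fun i _ => mul_comm _ _)
  have hz' : ∀ w ∈ U, (inner ℝ w z : ℝ) = 0 := (Submodule.mem_orthogonal U z).mp hz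
  have hbalz : ∀ v : V, bal A z v = 0 := by
    intro v
    have h0 : Dmap (Pi.single v 1) ∈ U := LinearMap.mem_range_self _ _
    have h1 : (inner ℝ (Dmap (Pi.single v 1)) z : ℝ) = 0 := hz' _ h0
    rw [hinner] at h1
    have h2 : ∑ a : ↥A, (Dmap (Pi.single v 1)) a * z a = bal A z v := by
      unfold bal
      rw [← Finset.sum_sub_distrib]
      apply Finset.sum_congr rfl
      intro a _
      show ((Pi.single (M := fun _ : V => ℝ) v 1) ((a : V × V).1) - (Pi.single (M := fun _ : V => ℝ) v 1) ((a : V × V).2)) * z a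
        = (if (a : V × V).1 = v then z a else 0) - (if (a : V × V).2 = v then z a else 0)
      rw [Pi.single_apply, Pi.single_apply]
      split_ifs <;> ring
    rw [h2] at h1
    exact h1
  have hdzero : ∑ a : ↥A, d a * z a = 0 := h z hbalz
  have hzz : (inner ℝ z z : ℝ) = 0 := by
    have h3 : (inner ℝ d z : ℝ) = 0 := by rw [hinner]; exact hdzero
    have h4 : (inner ℝ u z : ℝ) = 0 := hz' u hu
    have h5 : (inner ℝ d z : ℝ) = inner ℝ u z + inner ℝ z z := by
      rw [← hdz, inner_add_left]
    rw [h3, h4] at h5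
    linarith
  have hz0 : z = 0 := inner_self_eq_zero.mp hzz
  have hud : Dmap = Dmap := rfl
  have hud2 : u = d := by rw [← hdz, hz0, add_zero]
  obtain ⟨σ, hσ⟩ := hu
  refine ⟨σ, fun a => ?_⟩
  have h6 : Dmap σ = d := by rw [hσ, hud2]
  rw [← h6]
  rfl


section Hard
variable {V : Type*} [Fintype V] [DecidableEq V]

lemma bal_comb (A : Finset (V × V)) (x y : ↥A → ℝ) (c e : ℝ) (v : V) :
    bal A (fun a => c * x a + e * y a) v = c * bal A x v + e * bal A y v := by
  unfold bal
  have h1 : ∀ (p : ↥A → Prop) (_ : DecidablePred p),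
      (∑ a : ↥A, if p a then c * x a + e * y a else 0) =
      c * (∑ a : ↥A, if p a then x a else 0) + e * ∑ a : ↥A, if p a then y a else 0 := by
    intro p hp
    rw [Finset.mul_sum, Finset.mul_sum, ← Finset.sum_add_distrib]
    apply Finset.sum_congr rfl
    intro a _
    split_ifs <;> ring
  rw [h1 (fun a => (a : V × V).1 = v) _, h1 (fun a => (a : V × V).2 = v) _]
  ring

lemma patsum (s t : V) (hst : s ≠ t) (c e : ℝ) (ψ : V → ℝ) :
    ∑ v : V, (if v = s then c else if v = t then e else 0) * ψ v = c * ψ s + e * ψ t := by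
  have h1 : ∀ v : V, (if v = s then c else if v = t then e else 0) * ψ v =
      (if v = s then c * ψ v else 0) + (if v = t then e * ψ v else 0) := by
    intro v
    by_cases hvs : v = s
    · subst hvs
      simp [hst]
    · by_cases hvt : v = t
      · subst hvt
        simp [hvs]
      · simp [hvs, hvt]
  rw [Finset.sum_congr rfl (fun v _ => h1 v), Finset.sum_add_distrib,
    Finset.sum_ite_eq' Finset.univ s (fun v => c * ψ v),
    Finset.sum_ite_eq' Finset.univ t (fun v => e * ψ v)]
  simp

lemma half_mem_stat (A : Finset (V × V)) (β : V × V → ℝ) (hβ : ∀ a ∈ A, 0 < β a)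
    (s t : V) (hst : s ≠ t) (πl πu : ℝ) (hπ : πl ≤ πu)
    {q : ℝ} (hq : 0 < q) (π₁ π₂ : V → ℝ)
    (hb1 : ∀ v : V, πl ≤ π₁ v ∧ π₁ v ≤ πu) (hb2 : ∀ v : V, πl ≤ π₂ v ∧ π₂ v ≤ πu)
    (hbal : ∀ v : V, balance A β π₁ v + balance A β π₂ v =
      if v = s then q else if v = t then -q else 0) :
    ∃ π : V → ℝ, (∀ v : V, πl ≤ π v ∧ π v ≤ πu) ∧
      ∀ v : V, balance A β π v = if v = s then q / 2 else if v = t then -(q / 2) else 0 := by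
  classical
  set bb : ↥A → ℝ := fun a => β ↑a with hbbdef
  have hbb : ∀ a : ↥A, 0 < bb a := fun a => hβ ↑a a.2
  set pat : V → ℝ := fun v => if v = s then q / 2 else if v = t then -(q / 2) else 0 with hpatdef
  set fl1 : ↥A → ℝ := fun a => inducedFlow β π₁ ↑a with hfl1
  set fl2 : ↥A → ℝ := fun a => inducedFlow β π₂ ↑a with hfl2
  set xt : ↥A → ℝ := fun a => (1/2 : ℝ) * fl1 a + (1/2 : ℝ) * fl2 a with hxt
  have hxtK : ∀ v : V, bal A xt v = pat v := by
    intro v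
    rw [hxt, bal_comb, hfl1, hfl2, ← balance_eq_bal, ← balance_eq_bal]
    have h0 := hbal v
    simp only [hpatdef]
    split_ifs at h0 ⊢ <;> linarith
  set E : (↥A → ℝ) → ℝ := fun x => ∑ a : ↥A, bb a * |x a| ^ 3 with hE
  have hEnonneg : ∀ x, 0 ≤ E x := by
    intro x; apply Finset.sum_nonneg; intro a _
    exact mul_nonneg (hbb a).le (by positivity)
  have hcoord : ∀ x : ↥A → ℝ, ∀ a : ↥A, E x ≤ E xt → |x a| ≤ E xt / bb a + 1 := by
    intro x a hEx
    have h1 : bb a * |x a| ^ 3 ≤ E x := by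
      rw [hE]
      exact Finset.single_le_sum (f := fun i : ↥A => bb i * |x i| ^ 3)
        (fun i _ => mul_nonneg (hbb i).le (pow_nonneg (abs_nonneg _) 3)) (Finset.mem_univ a)
    have h2 : |x a| ^ 3 ≤ E xt / bb a := by
      rw [le_div_iff₀ (hbb a)]
      calc |x a| ^ 3 * bb a = bb a * |x a| ^ 3 := by ring
        _ ≤ E x := h1
        _ ≤ E xt := hEx
    have h4 : 0 ≤ E xt / bb a := div_nonneg (hEnonneg xt) (hbb a).le
    by_cases h3 : |x a| ≤ 1
    · linarith
    · push_neg at h3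
      have h6 : (1:ℝ) ≤ |x a| := h3.le
      have h7 : (1:ℝ) * 1 ≤ |x a| * |x a| := mul_le_mul h6 h6 zero_le_one (abs_nonneg (x a))
      have h5 : |x a| ≤ |x a| ^ 3 := by nlinarith [abs_nonneg (x a)]
      linarith
  -- existence of minimizer
  obtain ⟨xs, hxsK, hglob⟩ : ∃ xs : ↥A → ℝ, (∀ v, bal A xs v = pat v) ∧
      ∀ y : ↥A → ℝ, (∀ v, bal A y v = pat v) → E xs ≤ E y := by
    set R : ↥A → ℝ := fun a => E xt / bb a + 1 with hR
    set C : Set (↥A → ℝ) :=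
      {x | (∀ v, bal A x v = pat v) ∧ ∀ a, x a ∈ Set.Icc (-(R a + 1)) (R a + 1)} with hC
    have hKclosed : IsClosed {x : ↥A → ℝ | ∀ v, bal A x v = pat v} := by
      have he : {x : ↥A → ℝ | ∀ v, bal A x v = pat v}
          = ⋂ v, {x : ↥A → ℝ | bal A x v = pat v} := by
        ext x; simp [Set.mem_iInter]
      rw [he]
      refine isClosed_iInter (fun v => isClosed_eq ?_ continuous_const)
      unfold bal
      apply Continuous.sub <;> refine continuous_finset_sum _ (fun a _ => ?_)
      · by_cases h : (a : V × V).1 = v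
        · simp only [h, if_true]; exact continuous_apply a
        · simp only [h, if_false]; exact continuous_const
      · by_cases h : (a : V × V).2 = v
        · simp only [h, if_true]; exact continuous_apply a
        · simp only [h, if_false]; exact continuous_const
    have hboxcpt : IsCompact {x : ↥A → ℝ | ∀ a, x a ∈ Set.Icc (-(R a + 1)) (R a + 1)} := by
      have he : {x : ↥A → ℝ | ∀ a, x a ∈ Set.Icc (-(R a + 1)) (R a + 1)}
          = Set.pi Set.univ (fun a => Set.Icc (-(R a + 1)) (R a + 1)) := by
        ext x
        simp only [Set.mem_setOf_eq, Set.mem_pi, Set.mem_univ, true_implies]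
      rw [he]
      exact isCompact_univ_pi (fun a => isCompact_Icc)
    have hCcpt : IsCompact C := by
      have he : C = {x : ↥A → ℝ | ∀ v, bal A x v = pat v}
          ∩ {x : ↥A → ℝ | ∀ a, x a ∈ Set.Icc (-(R a + 1)) (R a + 1)} := rfl
      rw [he]
      exact hboxcpt.inter_left hKclosed
    have hxtmem : ∀ (x : ↥A → ℝ), E x ≤ E xt → ∀ a, x a ∈ Set.Icc (-(R a + 1)) (R a + 1) := by
      intro x hx a
      have h1 := hcoord x a hx
      have h2 := abs_le.mp (show |x a| ≤ R a from h1)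
      constructor <;> [linarith [h2.1]; linarith [h2.2]]
    have hCne : C.Nonempty := ⟨xt, hxtK, hxtmem xt le_rfl⟩
    have hEcont : Continuous E := by
      rw [hE]
      refine continuous_finset_sum _ (fun a _ => ?_)
      exact continuous_const.mul (((continuous_apply a).abs).pow 3)
    obtain ⟨xs, hxsC, hmin⟩ := hCcpt.exists_isMinOn hCne hEcont.continuousOn
    refine ⟨xs, hxsC.1, ?_⟩
    intro y hy
    by_contra hcon
    push_neg at hcon
    have hy1 : E y ≤ E xt := by
      have h8 := hmin (show xt ∈ C from ⟨hxtK, hxtmem xt le_rfl⟩)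
      simp only [Set.mem_setOf_eq] at h8
      linarith
    have hyC : y ∈ C := ⟨hy, hxtmem y hy1⟩
    have h9 := hmin hyC
    simp only [Set.mem_setOf_eq] at h9
    exact absurd h9 (not_le.mpr hcon)
  -- potentials
  obtain ⟨σ, hσ⟩ : ∃ σ : V → ℝ, ∀ a : ↥A, gg (bb a) (xs a) = σ (a : V × V).1 - σ (a : V × V).2 := by
    apply exists_potential A (WithLp.toLp 2 (fun a => gg (bb a) (xs a)))
    intro z hz
    have hfeas : ∀ ε : ℝ, ∀ v, bal A (fun a => xs a + ε * z a) v = pat v := by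
      intro ε v
      rw [bal_linear, hz v, hxsK v, mul_zero, add_zero]
    set φ : ℝ → ℝ := fun ε => E (fun a => xs a + ε * z a) with hφ
    have hloc : IsLocalMin φ 0 := by
      apply Filter.Eventually.of_forall
      intro ε
      have he : (fun a : ↥A => xs a + 0 * z a) = xs := by funext a; ring
      have h1 : φ 0 = E xs := by
        rw [hφ]
        show E (fun a => xs a + 0 * z a) = E xs
        rw [he]
      rw [h1]
      exact hglob _ (hfeas ε)
    have hderiv : HasDerivAt φ (∑ a : ↥A, bb a * (3 * (xs a * |xs a|) * z a)) 0 := by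
      have hshow : HasDerivAt (fun ε => ∑ a : ↥A, bb a * |xs a + ε * z a| ^ 3)
          (∑ a : ↥A, bb a * (3 * (xs a * |xs a|) * z a)) 0 := by
        apply HasDerivAt.fun_sum
        intro a _
        have hin : HasDerivAt (fun ε : ℝ => xs a + ε * z a) (z a) 0 := by
          simpa using (hasDerivAt_mul_const (z a)).const_add (xs a)
        have hout := hasDerivAt_abs_cube (xs a + 0 * z a)
        have hcomp := HasDerivAt.comp (0:ℝ) hout hin
        have hmul := hcomp.const_mul (bb a)
        have he0 : xs a + 0 * z a = xs a := by ring
        rw [he0] at hmul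
        simpa [Function.comp] using hmul
      exact hshow
    have h0 := hloc.hasDerivAt_eq_zero hderiv
    have h2 : ∑ a : ↥A, gg (bb a) (xs a) * z a
        = (1/3) * ∑ a : ↥A, bb a * (3 * (xs a * |xs a|) * z a) := by
      rw [Finset.mul_sum]
      apply Finset.sum_congr rfl
      intro a _
      simp only [gg]
      ring
    rw [h2, h0, mul_zero]
  have hxsf : ∀ a : ↥A, xs a = ff (bb a) (σ (a : V × V).1 - σ (a : V × V).2) := by
    intro a; rw [← hσ a, ff_gg (hbb a)]
  -- energy identity and bounds
  have hExs : E xs = (q / 2) * (σ s - σ t) := by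
    have c1 : E xs = ∑ a : ↥A, xs a * gg (bb a) (xs a) := by
      rw [hE]
      exact Finset.sum_congr rfl (fun a _ => (x_mul_gg (bb a) (xs a)).symm)
    have c2 : E xs = ∑ a : ↥A, xs a * (σ (a : V × V).1 - σ (a : V × V).2) := by
      rw [c1]
      exact Finset.sum_congr rfl (fun a _ => by rw [hσ a])
    rw [c2, parts A xs σ, Finset.sum_congr rfl (fun v (_ : v ∈ Finset.univ) => by rw [hxsK v])]
    have c3 := patsum s t hst (q/2) (-(q/2)) σ
    simp only [hpatdef]
    rw [c3]
    ring
  have hExt : E xt ≤ (q / 2) * (πu - πl) := by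
    set πm : V → ℝ := fun v => (π₁ v + π₂ v) / 2 with hπm
    have hper : ∀ a : ↥A, bb a * |xt a| ^ 3 ≤ xt a * (πm (a : V × V).1 - πm (a : V × V).2) := by
      intro a
      have hu : fl1 a = ff (bb a) (π₁ (a : V × V).1 - π₁ (a : V × V).2) := rfl
      have hv : fl2 a = ff (bb a) (π₂ (a : V × V).1 - π₂ (a : V × V).2) := rfl
      have hgu : gg (bb a) (fl1 a) = π₁ (a : V × V).1 - π₁ (a : V × V).2 := by
        rw [hu, gg_ff (hbb a)]
      have hgv : gg (bb a) (fl2 a) = π₂ (a : V × V).1 - π₂ (a : V × V).2 := by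
        rw [hv, gg_ff (hbb a)]
      have hmid : πm (a : V × V).1 - πm (a : V × V).2
          = (gg (bb a) (fl1 a) + gg (bb a) (fl2 a)) / 2 := by
        rw [hgu, hgv, hπm]
        ring
      have hxta : xt a = (fl1 a + fl2 a) / 2 := by rw [hxt]; ring
      rw [hmid, hxta]
      set u := fl1 a
      set w := fl2 a
      have habs2 : |(u + w) / 2| = |u + w| / 2 := by
        rw [abs_div]
        norm_num
      have hc := mul_le_mul_of_nonneg_left (core_ineq u w)
        (show (0:ℝ) ≤ bb a / 4 by linarith [hbb a])
      have e1 : bb a * |(u + w) / 2| ^ 3 = bb a / 4 * ((u + w) * ((u + w) * |u + w|) / 2) := by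
        rw [habs2]
        have : |u + w| ^ 3 = (u + w) * ((u + w) * |u + w|) := by
          have h9 : |u + w| * |u + w| = (u + w) * (u + w) := abs_mul_abs_self _
          calc |u + w| ^ 3 = (|u + w| * |u + w|) * |u + w| := by ring
            _ = (u + w) * (u + w) * |u + w| := by rw [h9]
            _ = (u + w) * ((u + w) * |u + w|) := by ring
        rw [habs2] at *
        linear_combination (bb a / 8) * this
      have e2 : (u + w) / 2 * ((gg (bb a) u + gg (bb a) w) / 2)
          = bb a / 4 * ((u + w) * (u * |u| + w * |w|)) := by
        simp only [gg]
        ring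
      rw [e1, e2]
      exact hc
    calc E xt ≤ ∑ a : ↥A, xt a * (πm (a : V × V).1 - πm (a : V × V).2) :=
          Finset.sum_le_sum (fun a _ => hper a)
      _ = ∑ v : V, bal A xt v * πm v := parts A xt πm
      _ = ∑ v : V, pat v * πm v :=
          Finset.sum_congr rfl (fun v _ => by rw [hxtK v])
      _ = (q/2) * πm s + (-(q/2)) * πm t := by
          simp only [hpatdef]
          exact patsum s t hst (q/2) (-(q/2)) πm
      _ ≤ (q / 2) * (πu - πl) := by
          have hs1 : πm s ≤ πu := by
            rw [hπm]; have := (hb1 s).2; have := (hb2 s).2; simp only []; linarith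
          have ht1 : πl ≤ πm t := by
            rw [hπm]; have := (hb1 t).1; have := (hb2 t).1; simp only []; linarith
          nlinarith
  have hspread : σ s - σ t ≤ πu - πl := by
    have h0 := hglob xt hxtK
    have h1 : (q / 2) * (σ s - σ t) ≤ (q / 2) * (πu - πl) := by
      rw [← hExs]; exact le_trans h0 hExt
    have hq2 : (0:ℝ) < q / 2 := by linarith
    exact le_of_mul_le_mul_left h1 hq2
  have hts : σ t ≤ σ s := by
    have h0 := hEnonneg xs
    rw [hExs] at h0
    nlinarith
  -- max principle, upper set
  have hupper : (∀ a : ↥A, (σ s < σ (a : V × V).1 ↔ σ s < σ (a : V × V).2)) ∧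
      (∀ a : ↥A, σ s < σ (a : V × V).1 → xs a = 0) := by
    set Sf : Finset V := Finset.univ.filter (fun v => σ s < σ v) with hSf
    have hmemS : ∀ v, v ∈ Sf ↔ σ s < σ v := by
      intro v; simp [hSf, Finset.mem_filter]
    have hcut := cut A xs Sf
    have hterm : ∀ a : ↥A, 0 ≤ xs a * ((if (a : V × V).1 ∈ Sf then (1:ℝ) else 0) -
        (if (a : V × V).2 ∈ Sf then (1:ℝ) else 0)) := by
      intro a
      by_cases h1 : (a : V × V).1 ∈ Sf <;> by_cases h2 : (a : V × V).2 ∈ Sf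
      · simp [h1, h2]
      · have hd : σ (a : V × V).2 ≤ σ s := le_of_not_gt (fun h => h2 ((hmemS _).mpr h))
        have hd2 : σ s < σ (a : V × V).1 := (hmemS _).mp h1
        have hpos : 0 < xs a := by
          rw [hxsf a]; exact ff_pos (hbb a) (by linarith)
        simp only [h1, if_true, h2, if_false]
        nlinarith
      · have hd : σ (a : V × V).1 ≤ σ s := le_of_not_gt (fun h => h1 ((hmemS _).mpr h))
        have hd2 : σ s < σ (a : V × V).2 := (hmemS _).mp h2
        have hneg : xs a < 0 := by
          rw [hxsf a]; exact ff_neg (hbb a) (by linarith)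
        simp only [h1, if_false, h2, if_true]
        nlinarith
      · simp [h1, h2]
    have hsS : s ∉ Sf := by simp [hSf]
    have hL : ∑ v ∈ Sf, bal A xs v = ∑ v ∈ Sf, pat v :=
      Finset.sum_congr rfl (fun v _ => hxsK v)
    have hpatv : ∀ v ∈ Sf, pat v ≤ 0 := by
      intro v hv
      have hvs : v ≠ s := fun h => hsS (h ▸ hv)
      simp only [hpatdef]
      rw [if_neg hvs]
      split_ifs
      · linarith
      · exact le_rfl
    have hRHS0 : ∑ a : ↥A, xs a * ((if (a : V × V).1 ∈ Sf then (1:ℝ) else 0) -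
        (if (a : V × V).2 ∈ Sf then (1:ℝ) else 0)) = 0 := by
      apply le_antisymm
      · rw [← hcut, hL]
        exact Finset.sum_nonpos hpatv
      · exact Finset.sum_nonneg (fun a _ => hterm a)
    have htermeq := (Finset.sum_eq_zero_iff_of_nonneg (fun a _ => hterm a)).mp hRHS0
    have htS : t ∉ Sf := by
      intro ht
      have hsum : ∑ v ∈ Sf, pat v = -(q/2) := by
        rw [Finset.sum_eq_single_of_mem t ht]
        · simp [hpatdef, Ne.symm hst]
        · intro v hv hvt
          have hvs : v ≠ s := fun h => hsS (h ▸ hv)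
          simp only [hpatdef]
          rw [if_neg hvs, if_neg hvt]
      rw [← hL, hcut, hRHS0] at hsum
      have : q / 2 > 0 := by linarith
      linarith
    have hiff : ∀ a : ↥A, (σ s < σ (a : V × V).1 ↔ σ s < σ (a : V × V).2) := by
      intro a
      constructor
      · intro h1
        by_contra h2
        have hpos : 0 < xs a := by
          rw [hxsf a]
          exact ff_pos (hbb a) (by linarith [le_of_not_gt h2])
        have h3 := htermeq a (Finset.mem_univ a)
        have hm1 : (a : V × V).1 ∈ Sf := (hmemS _).mpr h1
        have hm2 : (a : V × V).2 ∉ Sf := fun h => h2 ((hmemS _).mp h)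
        rw [if_pos hm1, if_neg hm2] at h3
        nlinarith
      · intro h2
        by_contra h1
        have hneg : xs a < 0 := by
          rw [hxsf a]
          exact ff_neg (hbb a) (by linarith [le_of_not_gt h1])
        have h3 := htermeq a (Finset.mem_univ a)
        have hm1 : (a : V × V).1 ∉ Sf := fun h => h1 ((hmemS _).mp h)
        have hm2 : (a : V × V).2 ∈ Sf := (hmemS _).mpr h2
        rw [if_neg hm1, if_pos hm2] at h3
        nlinarith
    refine ⟨hiff, ?_⟩
    set y : ↥A → ℝ := fun a => if σ s < σ (a : V × V).1 then 0 else xs a with hy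
    have hyK : ∀ v, bal A y v = pat v := by
      intro v
      by_cases hvS : σ s < σ v
      · have hvs : v ≠ s := fun h => by rw [h] at hvS; exact lt_irrefl _ hvS
        have hvt : v ≠ t := fun h => htS (by rw [← h]; exact (hmemS v).mpr hvS)
        have h1 : (∑ a : ↥A, if (a : V × V).1 = v then y a else 0) = 0 := by
          apply Finset.sum_eq_zero
          intro a _
          by_cases h : (a : V × V).1 = v
          · rw [if_pos h, hy]
            simp only []
            rw [if_pos (by rw [h]; exact hvS)]
          · rw [if_neg h]
        have h2 : (∑ a : ↥A, if (a : V × V).2 = v then y a else 0) = 0 := by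
          apply Finset.sum_eq_zero
          intro a _
          by_cases h : (a : V × V).2 = v
          · rw [if_pos h, hy]
            simp only []
            rw [if_pos ((hiff a).mpr (by rw [h]; exact hvS))]
          · rw [if_neg h]
        unfold bal
        rw [h1, h2]
        simp [hpatdef, hvs, hvt]
      · have h1 : (∑ a : ↥A, if (a : V × V).1 = v then y a else 0)
            = (∑ a : ↥A, if (a : V × V).1 = v then xs a else 0) := by
          apply Finset.sum_congr rfl
          intro a _
          by_cases h : (a : V × V).1 = v
          · rw [if_pos h, if_pos h, hy]
            simp only []
            rw [if_neg (by rw [h]; exact hvS)]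
          · rw [if_neg h, if_neg h]
        have h2 : (∑ a : ↥A, if (a : V × V).2 = v then y a else 0)
            = (∑ a : ↥A, if (a : V × V).2 = v then xs a else 0) := by
          apply Finset.sum_congr rfl
          intro a _
          by_cases h : (a : V × V).2 = v
          · rw [if_pos h, if_pos h, hy]
            simp only []
            have hna : ¬ σ s < σ (a : V × V).1 :=
              fun hc => hvS (by rw [← h]; exact (hiff a).mp hc)
            rw [if_neg hna]
          · rw [if_neg h, if_neg h]
        have : bal A y v = bal A xs v := by
          unfold bal
          rw [h1, h2]
        rw [this]
        exact hxsK v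
    have hEy : E y ≤ E xs := by
      rw [hE]
      apply Finset.sum_le_sum
      intro a _
      have : |y a| ≤ |xs a| := by
        rw [hy]
        simp only []
        split_ifs
        · simp only [abs_zero]; exact abs_nonneg _
        · exact le_rfl
      have h3 : |y a| ^ 3 ≤ |xs a| ^ 3 := by
        apply pow_le_pow_left₀ (abs_nonneg _) this
      exact mul_le_mul_of_nonneg_left h3 (hbb a).le
    have hEeq : E xs = E y := le_antisymm (hglob y hyK) hEy
    have hdiff : ∑ a : ↥A, (bb a * |xs a| ^ 3 - bb a * |y a| ^ 3) = 0 := by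
      rw [Finset.sum_sub_distrib]
      have e1 : E xs = ∑ a : ↥A, bb a * |xs a| ^ 3 := by rw [hE]
      have e2 : E y = ∑ a : ↥A, bb a * |y a| ^ 3 := by rw [hE]
      rw [← e1, ← e2, hEeq, sub_self]
    have hdnn : ∀ a : ↥A, 0 ≤ bb a * |xs a| ^ 3 - bb a * |y a| ^ 3 := by
      intro a
      have : |y a| ≤ |xs a| := by
        rw [hy]
        simp only []
        split_ifs
        · simp only [abs_zero]; exact abs_nonneg _
        · exact le_rfl
      have h3 : |y a| ^ 3 ≤ |xs a| ^ 3 := pow_le_pow_left₀ (abs_nonneg _) this 3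
      nlinarith [hbb a]
    have hzz := (Finset.sum_eq_zero_iff_of_nonneg (fun a _ => hdnn a)).mp hdiff
    intro a ha
    have h4 := hzz a (Finset.mem_univ a)
    have h5 : y a = 0 := by rw [hy]; simp only []; rw [if_pos ha]
    rw [h5] at h4
    simp only [abs_zero] at h4
    have h6 : |xs a| ^ 3 = 0 := by
      have := hbb a
      nlinarith
    have h7 : |xs a| = 0 := by
      exact pow_eq_zero_iff (by norm_num) |>.mp h6
    exact abs_eq_zero.mp h7
  have hlower : (∀ a : ↥A, (σ (a : V × V).1 < σ t ↔ σ (a : V × V).2 < σ t)) ∧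
      (∀ a : ↥A, σ (a : V × V).1 < σ t → xs a = 0) := by
    set Sf : Finset V := Finset.univ.filter (fun v => σ v < σ t) with hSf
    have hmemS : ∀ v, v ∈ Sf ↔ σ v < σ t := by
      intro v; simp [hSf, Finset.mem_filter]
    have hcut := cut A xs Sf
    have hterm : ∀ a : ↥A, xs a * ((if (a : V × V).1 ∈ Sf then (1:ℝ) else 0) -
        (if (a : V × V).2 ∈ Sf then (1:ℝ) else 0)) ≤ 0 := by
      intro a
      by_cases h1 : (a : V × V).1 ∈ Sf <;> by_cases h2 : (a : V × V).2 ∈ Sf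
      · simp [h1, h2]
      · have hd : σ t ≤ σ (a : V × V).2 := le_of_not_gt (fun h => h2 ((hmemS _).mpr h))
        have hd2 : σ (a : V × V).1 < σ t := (hmemS _).mp h1
        have hneg : xs a < 0 := by
          rw [hxsf a]; exact ff_neg (hbb a) (by linarith)
        simp only [h1, if_true, h2, if_false]
        nlinarith
      · have hd : σ t ≤ σ (a : V × V).1 := le_of_not_gt (fun h => h1 ((hmemS _).mpr h))
        have hd2 : σ (a : V × V).2 < σ t := (hmemS _).mp h2
        have hpos : 0 < xs a := by
          rw [hxsf a]; exact ff_pos (hbb a) (by linarith)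
        simp only [h1, if_false, h2, if_true]
        nlinarith
      · simp [h1, h2]
    have hsS : s ∉ Sf := by
      intro h
      have := (hmemS s).mp h
      linarith [hts]
    have htS : t ∉ Sf := by
      intro h
      have := (hmemS t).mp h
      exact lt_irrefl _ this
    have hL : ∑ v ∈ Sf, bal A xs v = ∑ v ∈ Sf, pat v :=
      Finset.sum_congr rfl (fun v _ => hxsK v)
    have hpat0 : ∀ v ∈ Sf, pat v = 0 := by
      intro v hv
      have hvs : v ≠ s := fun h => hsS (h ▸ hv)
      have hvt : v ≠ t := fun h => htS (h ▸ hv)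
      simp [hpatdef, hvs, hvt]
    have hRHS0 : ∑ a : ↥A, xs a * ((if (a : V × V).1 ∈ Sf then (1:ℝ) else 0) -
        (if (a : V × V).2 ∈ Sf then (1:ℝ) else 0)) = 0 := by
      apply le_antisymm
      · exact Finset.sum_nonpos (fun a _ => hterm a)
      · rw [← hcut, hL]
        rw [Finset.sum_congr rfl hpat0]
        simp
    have htermeq : ∀ a : ↥A, xs a * ((if (a : V × V).1 ∈ Sf then (1:ℝ) else 0) -
        (if (a : V × V).2 ∈ Sf then (1:ℝ) else 0)) = 0 := by
      intro a
      have hnn : ∀ a : ↥A, 0 ≤ -(xs a * ((if (a : V × V).1 ∈ Sf then (1:ℝ) else 0) -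
          (if (a : V × V).2 ∈ Sf then (1:ℝ) else 0))) := fun a => by linarith [hterm a]
      have hsum0 : ∑ a : ↥A, -(xs a * ((if (a : V × V).1 ∈ Sf then (1:ℝ) else 0) -
          (if (a : V × V).2 ∈ Sf then (1:ℝ) else 0))) = 0 := by
        rw [Finset.sum_neg_distrib, hRHS0, neg_zero]
      have := (Finset.sum_eq_zero_iff_of_nonneg (fun a _ => hnn a)).mp hsum0 a
        (Finset.mem_univ a)
      linarith
    have hiff : ∀ a : ↥A, (σ (a : V × V).1 < σ t ↔ σ (a : V × V).2 < σ t) := by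
      intro a
      constructor
      · intro h1
        by_contra h2
        have hneg : xs a < 0 := by
          rw [hxsf a]
          exact ff_neg (hbb a) (by linarith [le_of_not_gt h2])
        have h3 := htermeq a
        have hm1 : (a : V × V).1 ∈ Sf := (hmemS _).mpr h1
        have hm2 : (a : V × V).2 ∉ Sf := fun h => h2 ((hmemS _).mp h)
        rw [if_pos hm1, if_neg hm2] at h3
        nlinarith
      · intro h2
        by_contra h1
        have hpos : 0 < xs a := by
          rw [hxsf a]
          exact ff_pos (hbb a) (by linarith [le_of_not_gt h1])
        have h3 := htermeq a
        have hm1 : (a : V × V).1 ∉ Sf := fun h => h1 ((hmemS _).mp h)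
        have hm2 : (a : V × V).2 ∈ Sf := (hmemS _).mpr h2
        rw [if_neg hm1, if_pos hm2] at h3
        nlinarith
    refine ⟨hiff, ?_⟩
    set y : ↥A → ℝ := fun a => if σ (a : V × V).1 < σ t then 0 else xs a with hy
    have hyK : ∀ v, bal A y v = pat v := by
      intro v
      by_cases hvS : σ v < σ t
      · have hvs : v ≠ s := fun h => by rw [h] at hvS; linarith [hts]
        have hvt : v ≠ t := fun h => by rw [h] at hvS; exact lt_irrefl _ hvS
        have h1 : (∑ a : ↥A, if (a : V × V).1 = v then y a else 0) = 0 := by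
          apply Finset.sum_eq_zero
          intro a _
          by_cases h : (a : V × V).1 = v
          · rw [if_pos h, hy]
            simp only []
            rw [if_pos (by rw [h]; exact hvS)]
          · rw [if_neg h]
        have h2 : (∑ a : ↥A, if (a : V × V).2 = v then y a else 0) = 0 := by
          apply Finset.sum_eq_zero
          intro a _
          by_cases h : (a : V × V).2 = v
          · rw [if_pos h, hy]
            simp only []
            rw [if_pos ((hiff a).mpr (by rw [h]; exact hvS))]
          · rw [if_neg h]
        unfold bal
        rw [h1, h2]
        simp [hpatdef, hvs, hvt]
      · have h1 : (∑ a : ↥A, if (a : V × V).1 = v then y a else 0)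
            = (∑ a : ↥A, if (a : V × V).1 = v then xs a else 0) := by
          apply Finset.sum_congr rfl
          intro a _
          by_cases h : (a : V × V).1 = v
          · rw [if_pos h, if_pos h, hy]
            simp only []
            rw [if_neg (by rw [h]; exact hvS)]
          · rw [if_neg h, if_neg h]
        have h2 : (∑ a : ↥A, if (a : V × V).2 = v then y a else 0)
            = (∑ a : ↥A, if (a : V × V).2 = v then xs a else 0) := by
          apply Finset.sum_congr rfl
          intro a _
          by_cases h : (a : V × V).2 = v
          · rw [if_pos h, if_pos h, hy]
            simp only []
            have hna : ¬ σ (a : V × V).1 < σ t :=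
              fun hc => hvS (by rw [← h]; exact (hiff a).mp hc)
            rw [if_neg hna]
          · rw [if_neg h, if_neg h]
        have : bal A y v = bal A xs v := by
          unfold bal
          rw [h1, h2]
        rw [this]
        exact hxsK v
    have hEy : E y ≤ E xs := by
      rw [hE]
      apply Finset.sum_le_sum
      intro a _
      have : |y a| ≤ |xs a| := by
        rw [hy]
        simp only []
        split_ifs
        · simp only [abs_zero]; exact abs_nonneg _
        · exact le_rfl
      have h3 : |y a| ^ 3 ≤ |xs a| ^ 3 := by
        apply pow_le_pow_left₀ (abs_nonneg _) this
      exact mul_le_mul_of_nonneg_left h3 (hbb a).le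
    have hEeq : E xs = E y := le_antisymm (hglob y hyK) hEy
    have hdiff : ∑ a : ↥A, (bb a * |xs a| ^ 3 - bb a * |y a| ^ 3) = 0 := by
      rw [Finset.sum_sub_distrib]
      have e1 : E xs = ∑ a : ↥A, bb a * |xs a| ^ 3 := by rw [hE]
      have e2 : E y = ∑ a : ↥A, bb a * |y a| ^ 3 := by rw [hE]
      rw [← e1, ← e2, hEeq, sub_self]
    have hdnn : ∀ a : ↥A, 0 ≤ bb a * |xs a| ^ 3 - bb a * |y a| ^ 3 := by
      intro a
      have : |y a| ≤ |xs a| := by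
        rw [hy]
        simp only []
        split_ifs
        · simp only [abs_zero]; exact abs_nonneg _
        · exact le_rfl
      have h3 : |y a| ^ 3 ≤ |xs a| ^ 3 := pow_le_pow_left₀ (abs_nonneg _) this 3
      nlinarith [hbb a]
    have hzz := (Finset.sum_eq_zero_iff_of_nonneg (fun a _ => hdnn a)).mp hdiff
    intro a ha
    have h4 := hzz a (Finset.mem_univ a)
    have h5 : y a = 0 := by rw [hy]; simp only []; rw [if_pos ha]
    rw [h5] at h4
    simp only [abs_zero] at h4
    have h6 : |xs a| ^ 3 = 0 := by
      have := hbb a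
      nlinarith
    have h7 : |xs a| = 0 := pow_eq_zero_iff (by norm_num) |>.mp h6
    exact abs_eq_zero.mp h7
  -- witness
  set clamp : ℝ → ℝ := fun x => min (max x (σ t)) (σ s) with hclamp
  set π₀ : V → ℝ := fun v => πl + clamp (σ v) - σ t with hπ₀
  refine ⟨π₀, ?_, ?_⟩
  · intro v
    have h1 : σ t ≤ clamp (σ v) := le_min (le_max_right _ _) hts
    have h2 : clamp (σ v) ≤ σ s := min_le_right _ _
    constructor
    · rw [hπ₀]; simp only []; linarith
    · rw [hπ₀]; simp only []; linarith
  · intro v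
    have hflow : (fun a : ↥A => inducedFlow β π₀ ↑a) = xs := by
      funext a
      have hIF : inducedFlow β π₀ ↑a = ff (bb a) (π₀ (a : V × V).1 - π₀ (a : V × V).2) := rfl
      have hdrop : π₀ (a : V × V).1 - π₀ (a : V × V).2
          = clamp (σ (a : V × V).1) - clamp (σ (a : V × V).2) := by
        simp only [hπ₀]
        ring
      by_cases h1 : σ s < σ (a : V × V).1
      · have h2 : σ s < σ (a : V × V).2 := (hupper.1 a).mp h1
        have hc1 : clamp (σ (a : V × V).1) = σ s := by
          rw [hclamp]
          simp only []
          exact min_eq_right (le_trans h1.le (le_max_left _ _))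
        have hc2 : clamp (σ (a : V × V).2) = σ s := by
          rw [hclamp]
          simp only []
          exact min_eq_right (le_trans h2.le (le_max_left _ _))
        rw [hIF, hdrop, hc1, hc2, sub_self, ff_zero]
        exact (hupper.2 a h1).symm
      · by_cases h3 : σ (a : V × V).1 < σ t
        · have h4 : σ (a : V × V).2 < σ t := (hlower.1 a).mp h3
          have hc1 : clamp (σ (a : V × V).1) = σ t := by
            rw [hclamp]
            simp only []
            rw [max_eq_right h3.le]
            exact min_eq_left hts
          have hc2 : clamp (σ (a : V × V).2) = σ t := by
            rw [hclamp]
            simp only []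
            rw [max_eq_right h4.le]
            exact min_eq_left hts
          rw [hIF, hdrop, hc1, hc2, sub_self, ff_zero]
          exact (hlower.2 a h3).symm
        · have h5 : σ t ≤ σ (a : V × V).1 := le_of_not_gt h3
          have h6 : σ (a : V × V).1 ≤ σ s := le_of_not_gt h1
          have h7 : ¬ σ s < σ (a : V × V).2 := fun hc => h1 ((hupper.1 a).mpr hc)
          have h8 : ¬ σ (a : V × V).2 < σ t := fun hc => h3 ((hlower.1 a).mpr hc)
          have hc1 : clamp (σ (a : V × V).1) = σ (a : V × V).1 := by
            rw [hclamp]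
            simp only []
            rw [max_eq_left h5]
            exact min_eq_left h6
          have hc2 : clamp (σ (a : V × V).2) = σ (a : V × V).2 := by
            rw [hclamp]
            simp only []
            rw [max_eq_left (le_of_not_gt h8)]
            exact min_eq_left (le_of_not_gt h7)
          rw [hIF, hdrop, hc1, hc2]
          exact (hxsf a).symm
    rw [balance_eq_bal, hflow]
    exact hxsK v
end Hard

section FinalAux
variable {V : Type*} [Fintype V] [DecidableEq V]

lemma bal_bound (A : Finset (V × V)) (β : V × V → ℝ) (hβ : ∀ a ∈ A, 0 < β a)
    (πl πu : ℝ) (π : V → ℝ) (hbox : ∀ v : V, πl ≤ π v ∧ π v ≤ πu) (v : V) :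
    |balance A β π v| ≤ 2 * ∑ a ∈ A, Real.sqrt ((πu - πl) / β a) := by
  have hfl : ∀ a ∈ A, |inducedFlow β π a| ≤ Real.sqrt ((πu - πl) / β a) := by
    intro a ha
    have h1 : |π a.1 - π a.2| ≤ πu - πl := by
      rw [abs_le]
      constructor <;> [linarith [(hbox a.1).1, (hbox a.2).2]; linarith [(hbox a.1).2, (hbox a.2).1]]
    exact ff_abs_le (hβ a ha) h1
  have h2 : ∀ (p : V × V → Prop) (_ : DecidablePred p),
      |∑ a ∈ A.filter p, inducedFlow β π a| ≤ ∑ a ∈ A, Real.sqrt ((πu - πl) / β a) := by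
    intro p hp
    calc |∑ a ∈ A.filter p, inducedFlow β π a| ≤ ∑ a ∈ A.filter p, |inducedFlow β π a| :=
          Finset.abs_sum_le_sum_abs _ _
      _ ≤ ∑ a ∈ A, |inducedFlow β π a| :=
          Finset.sum_le_sum_of_subset_of_nonneg (Finset.filter_subset _ _)
            (fun a _ _ => abs_nonneg _)
      _ ≤ ∑ a ∈ A, Real.sqrt ((πu - πl) / β a) := Finset.sum_le_sum hfl
  unfold balance
  calc |(∑ a ∈ A.filter (fun a => a.1 = v), inducedFlow β π a) -
        ∑ a ∈ A.filter (fun a => a.2 = v), inducedFlow β π a|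
      ≤ |∑ a ∈ A.filter (fun a => a.1 = v), inducedFlow β π a| +
        |∑ a ∈ A.filter (fun a => a.2 = v), inducedFlow β π a| := abs_sub _ _
    _ ≤ 2 * ∑ a ∈ A, Real.sqrt ((πu - πl) / β a) := by
        have := h2 (fun a => a.1 = v) (by infer_instance)
        have := h2 (fun a => a.2 = v) (by infer_instance)
        linarith

end FinalAux

end GasAux

/-- The maximum value of a feasible 2-stage gas s-t-flow is twice the maximum value of a
feasible stationary gas s-t-flow (Theorem 3 of the paper): doubling a maximum feasible
stationary gas s-t-flow is optimal for the maximum 2-stage gas s-t-flow problem. -/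
theorem max_two_stage_eq_two_mul_max_stationary {V : Type*} [Fintype V] [DecidableEq V]
    (A : Finset (V × V)) (β : V × V → ℝ) (hβ : ∀ a ∈ A, 0 < β a)
    (s t : V) (hst : s ≠ t) (πmin πmax : ℝ) (hπ : πmin ≤ πmax) :
    sSup (twoStageValues A β s t πmin πmax) = 2 * sSup (statValues A β s t πmin πmax) := by
  classical
  set R : ℝ := 2 * ∑ a ∈ A, Real.sqrt ((πmax - πmin) / β a) with hR
  have hzero_stat : (0 : ℝ) ∈ statValues A β s t πmin πmax := by
    refine ⟨fun _ => πmin, fun v => ⟨le_rfl, hπ⟩, fun v => ?_⟩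
    have h1 : ∀ a ∈ A, inducedFlow β (fun _ => πmin) a = 0 := by
      intro a _
      simp [inducedFlow]
    unfold balance
    rw [Finset.sum_congr rfl (fun a ha => h1 a (Finset.mem_filter.mp ha).1),
      Finset.sum_congr rfl (fun a ha => h1 a (Finset.mem_filter.mp ha).1)]
    simp
  have hdouble : ∀ p ∈ statValues A β s t πmin πmax,
      2 * p ∈ twoStageValues A β s t πmin πmax := by
    rintro p ⟨π, hb, hbal⟩
    refine ⟨π, π, hb, hb, fun v => ?_⟩
    rw [hbal v]
    split_ifs <;> ring
  have hstat_bdd : BddAbove (statValues A β s t πmin πmax) := by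
    refine ⟨R, fun p hp => ?_⟩
    obtain ⟨π, hb, hbal⟩ := hp
    have h1 := hbal s
    rw [if_pos rfl] at h1
    have h2 := GasAux.bal_bound A β hβ πmin πmax π hb s
    rw [h1] at h2
    calc p ≤ |p| := le_abs_self p
      _ ≤ R := h2
  have htwo_bdd : BddAbove (twoStageValues A β s t πmin πmax) := by
    refine ⟨2 * R, fun p hp => ?_⟩
    obtain ⟨π₁, π₂, hb1, hb2, hbal⟩ := hp
    have h1 := hbal s
    rw [if_pos rfl] at h1
    have h2 := GasAux.bal_bound A β hβ πmin πmax π₁ hb1 s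
    have h3 := GasAux.bal_bound A β hβ πmin πmax π₂ hb2 s
    have h4 : p ≤ |balance A β π₁ s| + |balance A β π₂ s| := by
      rw [← h1]
      exact add_le_add (le_abs_self _) (le_abs_self _)
    linarith
  have hzero_two : (0 : ℝ) ∈ twoStageValues A β s t πmin πmax := by
    have := hdouble 0 hzero_stat
    simpa using this
  have hsup_stat_nonneg : 0 ≤ sSup (statValues A β s t πmin πmax) :=
    le_csSup hstat_bdd hzero_stat
  have hsup_two_nonneg : 0 ≤ sSup (twoStageValues A β s t πmin πmax) :=
    le_csSup htwo_bdd hzero_two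
  apply le_antisymm
  · apply Real.sSup_le _ (by linarith)
    intro q hq
    rcases le_or_gt q 0 with h | h
    · linarith
    · obtain ⟨π₁, π₂, hb1, hb2, hbal⟩ := hq
      obtain ⟨π, hb, hbal2⟩ := GasAux.half_mem_stat A β hβ s t hst πmin πmax hπ h π₁ π₂ hb1 hb2 hbal
      have : q / 2 ∈ statValues A β s t πmin πmax := ⟨π, hb, hbal2⟩
      have h5 := le_csSup hstat_bdd this
      linarith
  · have h6 : sSup (statValues A β s t πmin πmax)
        ≤ sSup (twoStageValues A β s t πmin πmax) / 2 := by
      apply Real.sSup_le _ (by linarith)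
      intro p hp
      have h7 := le_csSup htwo_bdd (hdouble p hp)
      linarith
    linarith
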